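/- Let a ∈ ℂ and let μ denote the Möbius function. Define b̃ : ℕ → ℂ by b̃ 0 = 1, b̃ 1 = 1/2^a, and b̃ n = μ(n)/n^a - ∑_{j=0}^{n-1} μ(n+1-j) b̃ j /(n+1-j)^a for n ≥ 2. Let α̃_0 satisfy α̃_0(0) = 1 and α̃_0(n) = α̃_0(n-1) - ∑_{j=0}^{n-1} b̃ (n-j) α̃_0(j) for n ≥ 1. Then α̃_0(n) = ∑_{j=1}^{n+1} μ(j)/j^a for all n ≥ 0. -/

import Mathlib

open ArithmeticFunction
open scoped ArithmeticFunction.Moebius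

theorem stmt_13 (a : ℂ) (b : ℕ → ℂ)
    (hb0 : b 0 = 1) (hb1 : b 1 = 1 / (2 : ℂ) ^ a)
    (hbn : ∀ n : ℕ, 2 ≤ n →
      b n = (μ n : ℂ) / (n : ℂ) ^ a
        - ∑ j ∈ Finset.range n, (μ (n + 1 - j) : ℂ) * b j / ((n + 1 - j : ℕ) : ℂ) ^ a)
    (α : ℕ → ℂ) (hα0 : α 0 = 1)
    (hα : ∀ n : ℕ, 1 ≤ n →
      α n = α (n - 1) - ∑ j ∈ Finset.range n, b (n - j) * α j) :
    ∀ n : ℕ, α n = ∑ j ∈ Finset.Icc 1 (n + 1), (μ j : ℂ) / (j : ℂ) ^ a := by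
  classical
  let c : ℕ → ℂ := fun k => (μ k : ℂ) / (k : ℂ) ^ a
  let S : ℕ → ℂ := fun n => ∑ j ∈ Finset.Icc 1 (n + 1), c j
  have hc1 : c 1 = 1 := by simp [c]
  have hc2 : c 2 = -(1 / (2 : ℂ) ^ a) := by
    have : μ 2 = -1 := by
      rw [ArithmeticFunction.moebius_apply_prime Nat.prime_two]
    simp [c, this]
    ring
  have hS0 : S 0 = 1 := by simp [S, hc1]
  have hSsucc : ∀ n : ℕ, S (n + 1) = S n + c (n + 2) := by
    intro n
    show (∑ j ∈ Finset.Icc 1 (n + 2), c j) = _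
    rw [Finset.sum_Icc_succ_top (by omega)]
  have key : ∀ m : ℕ, ∑ k ∈ Finset.range (m + 1), b (k + 1) * S (m - k) = -c (m + 2) := by
    intro m
    induction m with
    | zero => simp [hS0, hb1, hc2]
    | succ m ih =>
      rw [Finset.sum_range_succ]
      have h1 : ∑ k ∈ Finset.range (m + 1), b (k + 1) * S (m + 1 - k)
          = ∑ k ∈ Finset.range (m + 1), (b (k + 1) * S (m - k) + b (k + 1) * c (m + 2 - k)) := by
        apply Finset.sum_congr rfl
        intro k hk
        simp only [Finset.mem_range] at hk
        have e1 : m + 1 - k = (m - k) + 1 := by omega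
        have e2 : (m - k) + 2 = m + 2 - k := by omega
        rw [e1, hSsucc, e2, mul_add]
      rw [h1, Finset.sum_add_distrib, ih]
      -- use hbn at m+2
      have hb2 := hbn (m + 2) (by omega)
      have hterm : ∀ j ∈ Finset.range (m + 2),
          (μ (m + 2 + 1 - j) : ℂ) * b j / ((m + 2 + 1 - j : ℕ) : ℂ) ^ a
            = c (m + 3 - j) * b j := by
        intro j hj
        have e : m + 2 + 1 - j = m + 3 - j := by omega
        rw [e]
        rw [mul_div_right_comm]
      rw [Finset.sum_congr rfl hterm] at hb2
      rw [Finset.sum_range_succ'] at hb2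
      have hterm2 : ∀ j ∈ Finset.range (m + 1),
          c (m + 3 - (j + 1)) * b (j + 1) = b (j + 1) * c (m + 2 - j) := by
        intro j hj
        have e : m + 3 - (j + 1) = m + 2 - j := by omega
        rw [e, mul_comm]
      rw [Finset.sum_congr rfl hterm2] at hb2
      simp only [Nat.sub_zero, hb0, mul_one] at hb2
      have hcc : c (m + 2) = (μ (m + 2) : ℂ) / ((m + 2 : ℕ) : ℂ) ^ a := rfl
      rw [← hcc] at hb2
      have e5 : m + 1 - (m + 1) = 0 := by omega
      rw [e5, hS0]
      have e4 : m + 1 + 2 = m + 3 := by omega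
      rw [e4]
      linear_combination hb2
  have final : ∀ n : ℕ, α n = S n := by
    intro n
    induction n using Nat.strong_induction_on with
    | _ n ih =>
      match n with
      | 0 => rw [hα0, hS0]
      | Nat.succ m =>
        rw [hα (m + 1) (by omega)]
        simp only [Nat.add_sub_cancel]
        rw [ih m (by omega)]
        have hsum : ∑ j ∈ Finset.range (m + 1), b (m + 1 - j) * α j
            = ∑ j ∈ Finset.range (m + 1), b (m + 1 - j) * S j := by
          apply Finset.sum_congr rfl
          intro j hj
          simp only [Finset.mem_range] at hj
          rw [ih j (by omega)]
        rw [hsum]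
        have hrefl : ∑ j ∈ Finset.range (m + 1), b (m + 1 - j) * S j
            = ∑ k ∈ Finset.range (m + 1), b (k + 1) * S (m - k) := by
          rw [← Finset.sum_range_reflect]
          apply Finset.sum_congr rfl
          intro k hk
          simp only [Finset.mem_range] at hk
          have e1 : m + 1 - 1 - k = m - k := by omega
          have e2 : m + 1 - (m - k) = k + 1 := by omega
          rw [e1, e2]
        rw [hrefl, key m, hSsucc]
        ring
  intro n
  exact final n
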